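/- Let (R, 𝔪, k) be a Noetherian local ring of prime characteristic p and let M be an Artinian R-module with an injective Frobenius action F. Then every ideal in Γ = {Ann_R(N) : N an R-submodule of M with F(N) ⊆ N} is a radical ideal of R. -/

import Mathlib

/-- **Sharp; Enescu–Hochster (radicality).** Let `(R, 𝔪, k)` be a Noetherian local ring of
prime characteristic `p` and `M` an Artinian `R`-module with an injective Frobenius action `F`.
Then every ideal in the set `Γ` of annihilators of `F`-invariant submodules of `M` is a
radical ideal of `R`. -/
theorem annihilators_of_frobenius_invariant_submodules_isRadical
    {R M : Type*} [CommRing R] [IsLocalRing R] [IsNoetherianRing R]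
    (p : ℕ) [Fact p.Prime] [CharP R p]
    [AddCommGroup M] [Module R M] [IsArtinian R M]
    (F : M → M)
    (hadd : ∀ x y : M, F (x + y) = F x + F y)
    (hsmul : ∀ (r : R) (m : M), F (r • m) = r ^ p • F m)
    (hinj : Function.Injective F) :
    ∀ I ∈ {I : Ideal R | ∃ N : Submodule R M, (∀ x ∈ N, F x ∈ N) ∧ I = N.annihilator},
      I.IsRadical := by
  rintro I ⟨N, hFN, rfl⟩ r hr
  obtain ⟨n, hn⟩ := hr
  rw [Submodule.mem_annihilator] at hn ⊢
  have hF0 : F 0 = 0 := by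
    have h := hadd 0 0
    rw [add_zero] at h
    exact add_eq_left.mp h.symm
  -- iterate properties
  have hiter_smul : ∀ (e : ℕ) (s : R) (m : M), F^[e] (s • m) = s ^ p ^ e • F^[e] m := by
    intro e
    induction e with
    | zero => simp
    | succ e ih =>
      intro s m
      rw [Function.iterate_succ_apply', Function.iterate_succ_apply', ih, hsmul,
        ← pow_mul, pow_succ]
  have hiter_mem : ∀ (e : ℕ) (m : M), m ∈ N → F^[e] m ∈ N := by
    intro e
    induction e with
    | zero => intro m hm; simpa using hm
    | succ e ih =>
      intro m hm
      rw [Function.iterate_succ_apply']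
      exact hFN _ (ih m hm)
  have hiter_inj : ∀ e : ℕ, Function.Injective (F^[e]) := fun e => hinj.iterate e
  intro m hm
  -- choose e with p ^ e ≥ n
  have hp : 2 ≤ p := (Fact.out : p.Prime).two_le
  obtain ⟨e, he⟩ : ∃ e : ℕ, n ≤ p ^ e := ⟨n, le_trans (Nat.lt_two_pow_self (n := n)).le
    (Nat.pow_le_pow_left hp n)⟩
  apply hiter_inj e
  rw [hiter_smul, Function.iterate_fixed hF0 e,
    ← Nat.sub_add_cancel he, pow_add, mul_smul, hn _ (hiter_mem e m hm), smul_zero]
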